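/- Let ν, η be time-dependent vector fields as above, let φ^ε denote the two-parameter flow of ν + εη with φ = φ⁰ spatially C¹ and all spatial derivatives Dφ(s,t,y) invertible, and let I : ℝⁿ → ℝ be continuously differentiable. Fix x ∈ ℝⁿ and assume that ε ↦ φ^ε(1,0,x) is differentiable at ε = 0 with derivative −∫_0^1 [ Dφ(0,t, φ(1,0,x)) ]⁻¹ ( η(t, φ(1,t,x)) ) dt. Then the map ε ↦ I(φ^ε(1,0,x)) — the geometrically deformed template 𝒲(ν + εη, I) evaluated at x — is differentiable at ε = 0 with derivative −∫_0^1 ⟨ ∇(I ∘ φ(t,0,·))( φ(1,t,x) ), η(t, φ(1,t,x)) ⟩_{ℝⁿ} dt. -/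

import Mathlib

open MeasureTheory Set Filter Topology intervalIntegral
open scoped RealInnerProductSpace

lemma my_gronwall {a b : ℝ} (hab : a ≤ b) {l g : ℝ → ℝ} {C : ℝ} (hC : 0 ≤ C)
    (hl : IntegrableOn l (Icc a b)) (hl0 : ∀ t ∈ Icc a b, 0 ≤ l t)
    (hg : ContinuousOn g (Icc a b)) (hg0 : ∀ t ∈ Icc a b, 0 ≤ g t)
    (hbound : ∀ t ∈ Icc a b, g t ≤ C + ∫ r in a..t, l r * g r) :
    ∀ t ∈ Icc a b, g t ≤ C * Real.exp (2 * ∫ r in a..t, l r) := by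
  have hint : IntegrableOn (fun r => l r * g r) (Icc a b) volume :=
    hl.mul_continuousOn hg isCompact_Icc
  have hsub : ∀ {c d : ℝ}, c ∈ Icc a b → d ∈ Icc a b → uIoc c d ⊆ Icc a b := by
    intro c d hc hd
    intro r hr
    rcases Set.mem_uIoc.1 hr with ⟨h1, h2⟩ | ⟨h1, h2⟩
    · exact ⟨hc.1.trans h1.le, h2.trans hd.2⟩
    · exact ⟨hd.1.trans h1.le, h2.trans hc.2⟩
  have hii : ∀ {c d : ℝ}, c ∈ Icc a b → d ∈ Icc a b →
      IntervalIntegrable (fun r => l r * g r) volume c d := by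
    intro c d hc hd
    rw [intervalIntegrable_iff]
    exact hint.mono_set (hsub hc hd)
  have hiil : ∀ {c d : ℝ}, c ∈ Icc a b → d ∈ Icc a b →
      IntervalIntegrable l volume c d := by
    intro c d hc hd
    rw [intervalIntegrable_iff]
    exact hl.mono_set (hsub hc hd)
  set G : ℝ → ℝ := fun t => C + ∫ r in a..t, l r * g r with hGdef
  set Λ : ℝ → ℝ := fun t => ∫ r in a..t, l r with hΛdef
  have hGadd : ∀ {c d : ℝ}, c ∈ Icc a b → d ∈ Icc a b →
      G d = G c + ∫ r in c..d, l r * g r := by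
    intro c d hc hd
    have := integral_interval_sub_left (hii (left_mem_Icc.2 hab) hd)
      (hii (left_mem_Icc.2 hab) hc)
    simp only [hGdef]
    linarith [this]
  have hΛadd : ∀ {c d : ℝ}, c ∈ Icc a b → d ∈ Icc a b →
      Λ d = Λ c + ∫ r in c..d, l r := by
    intro c d hc hd
    have := integral_interval_sub_left (hiil (left_mem_Icc.2 hab) hd)
      (hiil (left_mem_Icc.2 hab) hc)
    simp only [hΛdef]
    linarith [this]
  have hΛmono : ∀ {c d : ℝ}, c ∈ Icc a b → d ∈ Icc a b → c ≤ d → Λ c ≤ Λ d := by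
    intro c d hc hd hcd
    have h0 : 0 ≤ ∫ r in c..d, l r :=
      intervalIntegral.integral_nonneg hcd (fun u hu => hl0 u ⟨hc.1.trans hu.1, hu.2.trans hd.2⟩)
    rw [hΛadd hc hd]; linarith
  have contG : ContinuousOn G (Icc a b) := by
    apply continuousOn_const.add
    have := intervalIntegral.continuousOn_primitive_interval
      (f := fun r => l r * g r) (μ := volume) (a := a) (b := b) (by rwa [uIcc_of_le hab])
    rwa [uIcc_of_le hab] at this
  have contΛ : ContinuousOn Λ (Icc a b) := by
    have := intervalIntegral.continuousOn_primitive_interval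
      (f := l) (μ := volume) (a := a) (b := b) (by rwa [uIcc_of_le hab])
    rwa [uIcc_of_le hab] at this
  have hgG : ∀ t ∈ Icc a b, g t ≤ G t := hbound
  have hG0 : ∀ t ∈ Icc a b, 0 ≤ G t := fun t ht => le_trans (hg0 t ht) (hgG t ht)
  have hGa : G a = C := by simp [hGdef]
  have hΛa : Λ a = 0 := by simp [hΛdef]
  clear_value G Λ
  have main : Icc a b ⊆ {t | G t ≤ C * Real.exp (2 * Λ t)} := by
    apply IsClosed.Icc_subset_of_forall_exists_gt
    · have : {t | G t ≤ C * Real.exp (2 * Λ t)} ∩ Icc a b = Icc a b ∩ (fun t => G t - C * Real.exp (2 * Λ t)) ⁻¹' Iic 0 := by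
        ext t
        simp only [mem_inter_iff, mem_setOf_eq, mem_preimage, mem_Iic, and_comm,
          sub_nonpos]
      rw [this]
      exact ContinuousOn.preimage_isClosed_of_isClosed
        (contG.sub (continuousOn_const.mul
          (Real.continuous_exp.comp_continuousOn (continuousOn_const.mul contΛ))))
        isClosed_Icc isClosed_Iic
    · show G a ≤ C * Real.exp (2 * Λ a)
      have h1 : G a = C := by rw [hGa]
      have h2 : Λ a = 0 := hΛa
      rw [h1, h2]
      simp
    · rintro x ⟨hxs, hxab⟩ y (hy : x < y)
      have hxmem : x ∈ Icc a b := ⟨hxab.1, hxab.2.le⟩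
      have hxb : x < b := hxab.2
      have hcw := contΛ x hxmem
      rw [ContinuousWithinAt, Metric.tendsto_nhdsWithin_nhds] at hcw
      obtain ⟨δ, hδ, hδprop⟩ := hcw (1/4) (by norm_num)
      set t1 := min (x + δ/2) (min y b) with ht1def
      have hxt1 : x < t1 := lt_min (by linarith) (lt_min hy hxb)
      have ht1b : t1 ≤ b := (min_le_right _ _).trans (min_le_right _ _)
      have ht1y : t1 ≤ y := (min_le_right _ _).trans (min_le_left _ _)
      have ht1x : t1 ≤ x + δ/2 := min_le_left _ _
      have ht1mem : t1 ∈ Icc a b := ⟨hxmem.1.trans hxt1.le, ht1b⟩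
      clear ht1def
      clear_value t1
      have hJI : Icc x t1 ⊆ Icc a b := fun r hr => ⟨hxmem.1.trans hr.1, hr.2.trans ht1b⟩
      have hΛt1 : Λ t1 - Λ x < 1/4 := by
        have : dist (Λ t1) (Λ x) < 1/4 := by
          apply hδprop ht1mem
          rw [Real.dist_eq, abs_of_pos (by linarith)]
          linarith
        calc Λ t1 - Λ x ≤ |Λ t1 - Λ x| := le_abs_self _
        _ < 1/4 := by rwa [Real.dist_eq] at this
      obtain ⟨w, hwJ, hwmax⟩ :=
        isCompact_Icc.exists_isMaxOn (nonempty_Icc.2 hxt1.le) (hg.mono hJI)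
      have hM0 : 0 ≤ g w := hg0 w (hJI hwJ)
      have hkey : ∀ t ∈ Icc x t1, G t ≤ G x + g w * (Λ t - Λ x) := by
        intro t ht
        have htmem : t ∈ Icc a b := hJI ht
        have h1 : (∫ r in x..t, l r * g r) ≤ ∫ r in x..t, l r * g w := by
          apply intervalIntegral.integral_mono_on ht.1 (hii hxmem htmem)
            ((hiil hxmem htmem).mul_const (g w))
          intro r hr
          have hrmem : r ∈ Icc a b := hJI ⟨hr.1, hr.2.trans ht.2⟩
          have : g r ≤ g w := hwmax ⟨hr.1, hr.2.trans ht.2⟩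
          exact mul_le_mul_of_nonneg_left this (hl0 r hrmem)
        have h2 : (∫ r in x..t, l r * g w) = (Λ t - Λ x) * g w := by
          rw [intervalIntegral.integral_mul_const]
          congr 1
          have := hΛadd hxmem htmem
          linarith
        rw [hGadd hxmem htmem]
        nlinarith [h1, h2]
      have hMb : g w ≤ G x + g w * (1/4) := by
        have h1 : g w ≤ G w := hgG w (hJI hwJ)
        have h2 : G w ≤ G x + g w * (Λ w - Λ x) := hkey w hwJ
        have h3 : Λ w - Λ x ≤ Λ t1 - Λ x := by
          have := hΛmono (hJI hwJ) ht1mem hwJ.2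
          linarith
        have h4 : Λ w - Λ x ≤ 1/4 := by linarith
        have h5 := mul_le_mul_of_nonneg_left h4 hM0
        linarith
      have hMGx : g w ≤ (4/3) * G x := by linarith
      refine ⟨t1, ?_, hxt1, ht1y⟩
      show G t1 ≤ C * Real.exp (2 * Λ t1)
      have hu0 : 0 ≤ Λ t1 - Λ x := by
        have := hΛmono hxmem ht1mem hxt1.le
        linarith
      have hGx0 : 0 ≤ G x := hG0 x hxmem
      have e1 : G t1 ≤ G x + (4/3) * G x * (Λ t1 - Λ x) := by
        have h6 := hkey t1 (right_mem_Icc.2 hxt1.le)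
        have h7 := mul_le_mul_of_nonneg_right hMGx hu0
        linarith
      have e2 : G x * (1 + (4/3) * (Λ t1 - Λ x)) ≤ G x * Real.exp (2 * (Λ t1 - Λ x)) := by
        apply mul_le_mul_of_nonneg_left _ hGx0
        have := Real.add_one_le_exp (2 * (Λ t1 - Λ x))
        linarith
      have e3 : G x * Real.exp (2*(Λ t1 - Λ x)) ≤ (C * Real.exp (2 * Λ x)) * Real.exp (2*(Λ t1 - Λ x)) :=
        mul_le_mul_of_nonneg_right hxs (Real.exp_nonneg _)
      calc G t1 ≤ G x + (4/3) * G x * (Λ t1 - Λ x) := e1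
      _ = G x * (1 + (4/3) * (Λ t1 - Λ x)) := by ring
      _ ≤ G x * Real.exp (2 * (Λ t1 - Λ x)) := e2
      _ ≤ (C * Real.exp (2 * Λ x)) * Real.exp (2*(Λ t1 - Λ x)) := e3
      _ = C * Real.exp (2 * Λ t1) := by
          have harg : 2 * Λ x + 2 * (Λ t1 - Λ x) = 2 * Λ t1 := by ring
          rw [mul_assoc, ← Real.exp_add, harg]
  intro t ht
  have := (hgG t ht).trans (main ht)
  rwa [hΛdef] at this

lemma my_gronwall_rev {a b : ℝ} (hab : a ≤ b) {l g : ℝ → ℝ} {C : ℝ} (hC : 0 ≤ C)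
    (hl : IntegrableOn l (Icc a b)) (hl0 : ∀ t ∈ Icc a b, 0 ≤ l t)
    (hg : ContinuousOn g (Icc a b)) (hg0 : ∀ t ∈ Icc a b, 0 ≤ g t)
    (hbound : ∀ t ∈ Icc a b, g t ≤ C + ∫ r in t..b, l r * g r) :
    ∀ t ∈ Icc a b, g t ≤ C * Real.exp (2 * ∫ r in t..b, l r) := by
  have hmaps : ∀ t ∈ Icc a b, a + b - t ∈ Icc a b := by
    intro t ht
    exact ⟨by linarith [ht.2], by linarith [ht.1]⟩
  have hrefl : ∀ {F : ℝ → ℝ}, IntegrableOn F (Icc a b) →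
      IntegrableOn (fun r => F (a + b - r)) (Icc a b) := by
    intro F hF
    have h1 : IntervalIntegrable F volume a b :=
      (intervalIntegrable_iff_integrableOn_Icc_of_le hab).2 hF
    have h2 := h1.comp_sub_left (a + b)
    have e1 : a + b - a = b := by ring
    have e2 : a + b - b = a := by ring
    rw [e1, e2] at h2
    exact (intervalIntegrable_iff_integrableOn_Icc_of_le hab).1 h2.symm
  have hcomp : ∀ {F : ℝ → ℝ}, IntegrableOn F (Icc a b) → ∀ t ∈ Icc a b,
      (∫ r in a..t, F (a + b - r)) = ∫ r in (a + b - t)..b, F r := by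
    intro F hF t ht
    have := intervalIntegral.integral_comp_sub_left (a := a) (b := t) F (a + b)
    rw [this]
    congr 1
    ring
  have hgr : ContinuousOn (fun r => g (a + b - r)) (Icc a b) :=
    hg.comp ((continuous_const.sub continuous_id).continuousOn) hmaps
  have key := my_gronwall hab hC (hrefl hl)
    (fun t ht => hl0 _ (hmaps t ht)) hgr (fun t ht => hg0 _ (hmaps t ht)) ?_
  · intro t ht
    have h := key (a + b - t) (hmaps t ht)
    have e : a + b - (a + b - t) = t := by ring
    rw [e] at h
    rwa [hcomp hl (a + b - t) (hmaps t ht), e] at h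
  · intro t ht
    have h := hbound (a + b - t) (hmaps t ht)
    have hintF : IntegrableOn (fun r => l r * g r) (Icc a b) volume :=
      hl.mul_continuousOn hg isCompact_Icc
    rw [hcomp hintF t ht]
    exact h

lemma flow_dist {n : ℕ} (f : ℝ → EuclideanSpace ℝ (Fin n) → EuclideanSpace ℝ (Fin n))
    {l : ℝ → ℝ} (hl : IntegrableOn l (Icc (0:ℝ) 1)) (hl0 : ∀ t ∈ Icc (0:ℝ) 1, 0 ≤ l t)
    (hlip : ∀ t ∈ Icc (0:ℝ) 1, ∀ x y, ‖f t x - f t y‖ ≤ l t * ‖x - y‖)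
    {u v : ℝ → EuclideanSpace ℝ (Fin n)} {τ : ℝ} (hτ : τ ∈ Icc (0:ℝ) 1)
    (hu : ContinuousOn u (Icc (0:ℝ) 1)) (hv : ContinuousOn v (Icc (0:ℝ) 1))
    (hui : IntegrableOn (fun r => f r (u r)) (Icc (0:ℝ) 1))
    (hvi : IntegrableOn (fun r => f r (v r)) (Icc (0:ℝ) 1))
    (hue : ∀ t ∈ Icc (0:ℝ) 1, u t = u τ + ∫ r in τ..t, f r (u r))
    (hve : ∀ t ∈ Icc (0:ℝ) 1, v t = v τ + ∫ r in τ..t, f r (v r)) :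
    ∀ t ∈ Icc (0:ℝ) 1, ‖u t - v t‖ ≤ ‖u τ - v τ‖ * Real.exp (2 * ∫ r in (0:ℝ)..1, l r) := by
  have hsub : ∀ {c d : ℝ}, c ∈ Icc (0:ℝ) 1 → d ∈ Icc (0:ℝ) 1 → uIoc c d ⊆ Icc (0:ℝ) 1 := by
    intro c d hc hd r hr
    rcases Set.mem_uIoc.1 hr with ⟨h1, h2⟩ | ⟨h1, h2⟩
    · exact ⟨hc.1.trans h1.le, h2.trans hd.2⟩
    · exact ⟨hd.1.trans h1.le, h2.trans hc.2⟩
  have hiu : ∀ {c d : ℝ}, c ∈ Icc (0:ℝ) 1 → d ∈ Icc (0:ℝ) 1 →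
      IntervalIntegrable (fun r => f r (u r)) volume c d := fun hc hd => by
    rw [intervalIntegrable_iff]; exact hui.mono_set (hsub hc hd)
  have hiv : ∀ {c d : ℝ}, c ∈ Icc (0:ℝ) 1 → d ∈ Icc (0:ℝ) 1 →
      IntervalIntegrable (fun r => f r (v r)) volume c d := fun hc hd => by
    rw [intervalIntegrable_iff]; exact hvi.mono_set (hsub hc hd)
  have hil : ∀ {c d : ℝ}, c ∈ Icc (0:ℝ) 1 → d ∈ Icc (0:ℝ) 1 →
      IntervalIntegrable l volume c d := fun hc hd => by
    rw [intervalIntegrable_iff]; exact hl.mono_set (hsub hc hd)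
  have hgc : ContinuousOn (fun t => ‖u t - v t‖) (Icc (0:ℝ) 1) := (hu.sub hv).norm
  have hgint : IntegrableOn (fun r => l r * ‖u r - v r‖) (Icc (0:ℝ) 1) volume :=
    hl.mul_continuousOn hgc isCompact_Icc
  have hilg : ∀ {c d : ℝ}, c ∈ Icc (0:ℝ) 1 → d ∈ Icc (0:ℝ) 1 →
      IntervalIntegrable (fun r => l r * ‖u r - v r‖) volume c d := fun hc hd => by
    rw [intervalIntegrable_iff]; exact hgint.mono_set (hsub hc hd)
  have hdiff : ∀ t ∈ Icc (0:ℝ) 1,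
      u t - v t = (u τ - v τ) + ∫ r in τ..t, (f r (u r) - f r (v r)) := by
    intro t ht
    rw [intervalIntegral.integral_sub (hiu hτ ht) (hiv hτ ht), hue t ht, hve t ht]
    abel
  have hC : (0:ℝ) ≤ ‖u τ - v τ‖ := norm_nonneg _
  have hnormint : ∀ t ∈ Icc (0:ℝ) 1, τ ≤ t →
      ‖∫ r in τ..t, (f r (u r) - f r (v r))‖ ≤ ∫ r in τ..t, l r * ‖u r - v r‖ := by
    intro t ht hτt
    refine (intervalIntegral.norm_integral_le_integral_norm hτt).trans ?_
    apply intervalIntegral.integral_mono_on hτt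
      (((hiu hτ ht).sub (hiv hτ ht)).norm) (hilg hτ ht)
    intro r hr
    exact hlip r ⟨hτ.1.trans hr.1, hr.2.trans ht.2⟩ (u r) (v r)
  -- l is nonneg, so ∫_c^d l ≤ ∫_0^1 l for [c,d] ⊆ [0,1]
  have hlsub : ∀ {c d : ℝ}, c ∈ Icc (0:ℝ) 1 → d ∈ Icc (0:ℝ) 1 → c ≤ d →
      (∫ r in c..d, l r) ≤ ∫ r in (0:ℝ)..1, l r := by
    intro c d hc hd hcd
    have h1 : (∫ r in (0:ℝ)..c, l r) + (∫ r in c..d, l r) = ∫ r in (0:ℝ)..d, l r :=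
      intervalIntegral.integral_add_adjacent_intervals
        (hil (left_mem_Icc.2 zero_le_one) hc) (hil hc hd)
    have h2 : (∫ r in (0:ℝ)..d, l r) + (∫ r in d..1, l r) = ∫ r in (0:ℝ)..1, l r :=
      intervalIntegral.integral_add_adjacent_intervals
        (hil (left_mem_Icc.2 zero_le_one) hd) (hil hd (right_mem_Icc.2 zero_le_one))
    have h3 : 0 ≤ ∫ r in (0:ℝ)..c, l r :=
      intervalIntegral.integral_nonneg hc.1 (fun r hr => hl0 r ⟨hr.1, hr.2.trans hc.2⟩)
    have h4 : 0 ≤ ∫ r in d..1, l r :=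
      intervalIntegral.integral_nonneg hd.2 (fun r hr => hl0 r ⟨hd.1.trans hr.1, hr.2⟩)
    linarith
  intro t ht
  rcases le_total τ t with hτt | htτ
  · -- forward, on [τ, 1]
    have hIcc : Icc τ 1 ⊆ Icc (0:ℝ) 1 := fun r hr => ⟨hτ.1.trans hr.1, hr.2⟩
    have fwd := my_gronwall (a := τ) (b := 1) hτ.2 hC (hl.mono_set hIcc)
      (fun r hr => hl0 r (hIcc hr)) (hgc.mono hIcc) (fun r _ => norm_nonneg _) ?_ t ⟨hτt, ht.2⟩
    · refine fwd.trans ?_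
      exact mul_le_mul_of_nonneg_left
        (Real.exp_le_exp.2 (by linarith [hlsub hτ ht hτt])) hC
    · intro r hr
      have hrm : r ∈ Icc (0:ℝ) 1 := hIcc hr
      calc ‖u r - v r‖ = ‖(u τ - v τ) + ∫ s in τ..r, (f s (u s) - f s (v s))‖ := by
            rw [hdiff r hrm]
      _ ≤ ‖u τ - v τ‖ + ‖∫ s in τ..r, (f s (u s) - f s (v s))‖ := norm_add_le _ _
      _ ≤ ‖u τ - v τ‖ + ∫ s in τ..r, l s * ‖u s - v s‖ := by
            linarith [hnormint r hrm hr.1]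
  · -- backward, on [0, τ]
    have hIcc : Icc (0:ℝ) τ ⊆ Icc (0:ℝ) 1 := fun r hr => ⟨hr.1, hr.2.trans hτ.2⟩
    have bwd := my_gronwall_rev (a := 0) (b := τ) hτ.1 hC (hl.mono_set hIcc)
      (fun r hr => hl0 r (hIcc hr)) (hgc.mono hIcc) (fun r _ => norm_nonneg _) ?_ t ⟨ht.1, htτ⟩
    · refine bwd.trans ?_
      exact mul_le_mul_of_nonneg_left
        (Real.exp_le_exp.2 (by linarith [hlsub ht hτ htτ])) hC
    · intro r hr
      have hrm : r ∈ Icc (0:ℝ) 1 := hIcc hr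
      have h1 : ‖∫ s in τ..r, (f s (u s) - f s (v s))‖
          = ‖∫ s in r..τ, (f s (u s) - f s (v s))‖ := by
        rw [intervalIntegral.integral_symm r τ, norm_neg]
      have h2 : ‖∫ s in r..τ, (f s (u s) - f s (v s))‖ ≤ ∫ s in r..τ, l s * ‖u s - v s‖ := by
        refine (intervalIntegral.norm_integral_le_integral_norm hr.2).trans ?_
        apply intervalIntegral.integral_mono_on hr.2
          (((hiu hrm hτ).sub (hiv hrm hτ)).norm) (hilg hrm hτ)
        intro s hs
        exact hlip s ⟨hrm.1.trans hs.1, hs.2.trans hτ.2⟩ (u s) (v s)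
      calc ‖u r - v r‖ = ‖(u τ - v τ) + ∫ s in τ..r, (f s (u s) - f s (v s))‖ := by
            rw [hdiff r hrm]
      _ ≤ ‖u τ - v τ‖ + ‖∫ s in τ..r, (f s (u s) - f s (v s))‖ := norm_add_le _ _
      _ ≤ ‖u τ - v τ‖ + ∫ s in r..τ, l s * ‖u s - v s‖ := by rw [h1]; linarith [h2]

lemma caratheodory_aesm {n : ℕ} {f : ℝ → EuclideanSpace ℝ (Fin n) → EuclideanSpace ℝ (Fin n)}
    (hmeas : ∀ c, AEStronglyMeasurable (fun t => f t c) (volume.restrict (Icc (0:ℝ) 1)))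
    (hcont : ∀ t ∈ Icc (0:ℝ) 1, Continuous (f t))
    {u : ℝ → EuclideanSpace ℝ (Fin n)} (hu : ContinuousOn u (Icc (0:ℝ) 1)) :
    AEStronglyMeasurable (fun t => f t (u t)) (volume.restrict (Icc (0:ℝ) 1)) := by
  set s : ℕ → ℝ → ℝ := fun k t => min 1 (max 0 ((⌊t * ((k:ℝ)+1)⌋ : ℤ) / ((k:ℝ)+1))) with hs
  have hk1 : ∀ k : ℕ, (0:ℝ) < (k:ℝ) + 1 := fun k => by positivity
  have hskmem : ∀ k t, s k t ∈ Icc (0:ℝ) 1 := by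
    intro k t
    refine ⟨le_min zero_le_one (le_max_left 0 _), min_le_left _ _⟩
  have hsk_close : ∀ k : ℕ, ∀ t ∈ Icc (0:ℝ) 1,
      t - 1/((k:ℝ)+1) < s k t ∧ s k t ≤ t := by
    intro k t ht
    have h1 : (⌊t * ((k:ℝ)+1)⌋ : ℝ) ≤ t * ((k:ℝ)+1) := Int.floor_le _
    have h2 : t * ((k:ℝ)+1) - 1 < (⌊t * ((k:ℝ)+1)⌋ : ℝ) := Int.sub_one_lt_floor _
    set q : ℝ := (⌊t * ((k:ℝ)+1)⌋ : ℤ) / ((k:ℝ)+1) with hq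
    have hq1 : q ≤ t := by
      rw [hq, div_le_iff₀ (hk1 k)]
      exact h1
    have hq2 : t - 1/((k:ℝ)+1) < q := by
      rw [hq, lt_div_iff₀ (hk1 k)]
      have : (t - 1/((k:ℝ)+1)) * ((k:ℝ)+1) = t * ((k:ℝ)+1) - 1 := by
        field_simp
      rw [this]
      exact h2
    have hmax : max 0 q ≤ t := max_le ht.1 hq1
    have hmax2 : t - 1/((k:ℝ)+1) < max 0 q := lt_max_of_lt_right hq2
    have hmin : s k t = max 0 q := by
      simp only [hs]
      exact min_eq_right (hmax.trans ht.2)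
    rw [hmin]
    exact ⟨hmax2, hmax⟩
  have htend : ∀ t ∈ Icc (0:ℝ) 1,
      Tendsto (fun k => s k t) atTop (nhdsWithin t (Icc (0:ℝ) 1)) := by
    intro t ht
    apply tendsto_nhdsWithin_of_tendsto_nhds_of_eventually_within
    · apply tendsto_of_tendsto_of_tendsto_of_le_of_le
        (g := fun k : ℕ => t - 1/((k:ℝ)+1)) (h := fun _ : ℕ => t)
      · have := tendsto_one_div_add_atTop_nhds_zero_nat (𝕜 := ℝ)
        have h2 : Tendsto (fun k : ℕ => t - 1/((k:ℝ)+1)) atTop (𝓝 (t - 0)) :=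
          tendsto_const_nhds.sub this
        simpa using h2
      · exact tendsto_const_nhds
      · exact fun k => (hsk_close k t ht).1.le
      · exact fun k => (hsk_close k t ht).2
    · exact Eventually.of_forall (fun k => hskmem k t)
  have happrox : ∀ k : ℕ, AEStronglyMeasurable (fun t => f t (u (s k t)))
      (volume.restrict (Icc (0:ℝ) 1)) := by
    intro k
    set c : ℤ → ℝ := fun j => min 1 (max 0 ((j:ℝ) / ((k:ℝ)+1))) with hc
    set A : ℤ → Set ℝ := fun j => (fun t => (⌊t * ((k:ℝ)+1)⌋ : ℤ)) ⁻¹' {j} with hA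
    have hAmeas : ∀ j, MeasurableSet (A j) :=
      fun j => ((measurable_id.mul_const _).floor) (measurableSet_singleton j)
    have hcover : Icc (0:ℝ) 1 = ⋃ j : ℤ, (A j ∩ Icc (0:ℝ) 1) := by
      ext t
      simp only [mem_iUnion, mem_inter_iff, mem_preimage, mem_singleton_iff, hA]
      constructor
      · intro h
        exact ⟨⌊t * ((k:ℝ)+1)⌋, rfl, h⟩
      · rintro ⟨j, _, h⟩
        exact h
    rw [show volume.restrict (Icc (0:ℝ) 1) = volume.restrict (⋃ j : ℤ, (A j ∩ Icc (0:ℝ) 1))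
      from by rw [← hcover]]
    rw [aestronglyMeasurable_iUnion_iff]
    intro j
    have hsval : ∀ t ∈ A j, s k t = c j := by
      intro t htj
      simp only [hA, mem_preimage, mem_singleton_iff] at htj
      simp only [hs, hc, htj]
    have base : AEStronglyMeasurable (fun t => f t (u (c j)))
        (volume.restrict (A j ∩ Icc (0:ℝ) 1)) :=
      (hmeas (u (c j))).mono_measure (Measure.restrict_mono inter_subset_right le_rfl)
    apply base.congr
    rw [EventuallyEq, ae_restrict_iff' ((hAmeas j).inter measurableSet_Icc)]
    exact Eventually.of_forall (fun t htm => by rw [hsval t htm.1])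
  apply aestronglyMeasurable_of_tendsto_ae atTop happrox
  rw [ae_restrict_iff' measurableSet_Icc]
  apply Eventually.of_forall
  intro t ht
  have h1 : Tendsto (fun k => u (s k t)) atTop (𝓝 (u t)) :=
    (hu t ht).tendsto.comp (htend t ht)
  exact ((hcont t ht).tendsto (u t)).comp h1

lemma aesm_ring_inverse {α : Type*} {m : MeasurableSpace α} {μ : Measure α}
    {R : Type*} [NormedRing R] [CompleteSpace R] [SecondCountableTopology R]
    {f : α → R} (hf : AEStronglyMeasurable f μ) (hunit : ∀ᵐ a ∂μ, IsUnit (f a)) :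
    AEStronglyMeasurable (fun a => Ring.inverse (f a)) μ := by
  letI : MeasurableSpace R := borel R
  haveI : BorelSpace R := ⟨rfl⟩
  obtain ⟨g, hgSM, hfg⟩ := hf
  set U : Set R := {x | IsUnit x} with hU
  have hUopen : IsOpen U := Units.isOpen
  have hUmeas : MeasurableSet (g ⁻¹' U) := hgSM.measurable (hUopen.measurableSet)
  classical
  set g' : α → R := (g ⁻¹' U).piecewise g (fun _ => (1:R)) with hg'
  have hg'meas : Measurable g' := Measurable.piecewise hUmeas hgSM.measurable measurable_const
  have hval : ∀ a, g' a ∈ U := by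
    intro a
    by_cases h : a ∈ g ⁻¹' U
    · rw [hg', piecewise_eq_of_mem _ _ _ h]; exact h
    · rw [hg', piecewise_eq_of_notMem _ _ _ h]; exact isUnit_one
  have hcontOn : ContinuousOn (Ring.inverse : R → R) U := by
    intro x hx
    have hxu : IsUnit x := hx
    have h2 := NormedRing.inverse_continuousAt hxu.unit
    rw [hxu.unit_spec] at h2
    exact h2.continuousWithinAt
  have hcomp : Measurable (fun a => Ring.inverse (g' a)) := by
    have hrest : Continuous (U.restrict (Ring.inverse : R → R)) :=
      continuousOn_iff_continuous_restrict.1 hcontOn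
    have heq : (fun a => Ring.inverse (g' a))
        = (U.restrict (Ring.inverse : R → R)) ∘ (fun a => (⟨g' a, hval a⟩ : U)) := rfl
    rw [heq]
    exact hrest.measurable.comp (hg'meas.subtype_mk)
  refine ⟨fun a => Ring.inverse (g' a), hcomp.stronglyMeasurable, ?_⟩
  filter_upwards [hfg, hunit] with a ha hua
  have hmem : a ∈ g ⁻¹' U := by rw [mem_preimage, ← ha]; exact hua
  rw [hg', piecewise_eq_of_mem _ _ _ hmem, ← ha]

lemma II_of_integrableOn {E' : Type*} [NormedAddCommGroup E'] {f : ℝ → E'}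
    (h : IntegrableOn f (Icc (0:ℝ) 1)) {c d : ℝ}
    (hc : c ∈ Icc (0:ℝ) 1) (hd : d ∈ Icc (0:ℝ) 1) : IntervalIntegrable f volume c d := by
  rw [intervalIntegrable_iff]
  refine h.mono_set ?_
  intro r hr
  rcases Set.mem_uIoc.1 hr with ⟨h1, h2⟩ | ⟨h1, h2⟩
  · exact ⟨hc.1.trans h1.le, h2.trans hd.2⟩
  · exact ⟨hd.1.trans h1.le, h2.trans hc.2⟩

lemma inner_gradient {n : ℕ} (f : EuclideanSpace ℝ (Fin n) → ℝ)
    (y v : EuclideanSpace ℝ (Fin n)) : ⟪gradient f y, v⟫ = fderiv ℝ f y v := by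
  unfold gradient
  exact InnerProductSpace.toDual_symm_apply

/-- **Derivative of the geometrically deformed template.**
`ν, η` are time-dependent `C¹` vector fields with integrable bounds, `φ ε` is the
two-parameter flow of `ν + εη` with `φ 0` spatially `C¹` and all spatial derivatives
invertible, and `I : ℝⁿ → ℝ` is `C¹`.  Fix `x` and assume that `ε ↦ φ ε 1 0 x` is
differentiable at `ε = 0` with derivative
`−∫_0^1 [Dφ(0,t)(φ(1,0,x))]⁻¹ ( η(t, φ(1,t,x)) ) dt`.  Then `ε ↦ I (φ ε 1 0 x)` (the
geometrically deformed template `𝒲(ν+εη, I)` at `x`) is differentiable at `ε = 0` with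
derivative `−∫_0^1 ⟪∇(I ∘ φ(t,0,·))(φ(1,t,x)), η(t, φ(1,t,x))⟫ dt`. -/
theorem geometric_deformed_template_derivative
    (n : ℕ)
    (ν η : ℝ → EuclideanSpace ℝ (Fin n) → EuclideanSpace ℝ (Fin n))
    (ℓ b : ℝ → ℝ)
    (hℓint : IntegrableOn ℓ (Icc (0:ℝ) 1))
    (hbint : IntegrableOn b (Icc (0:ℝ) 1))
    (hνmeas : ∀ x, AEStronglyMeasurable (fun t => ν t x) (volume.restrict (Icc (0:ℝ) 1)))
    (hηmeas : ∀ x, AEStronglyMeasurable (fun t => η t x) (volume.restrict (Icc (0:ℝ) 1)))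
    (hνC1 : ∀ t ∈ Icc (0:ℝ) 1, ContDiff ℝ 1 (ν t))
    (hηC1 : ∀ t ∈ Icc (0:ℝ) 1, ContDiff ℝ 1 (η t))
    (hνbd : ∀ t ∈ Icc (0:ℝ) 1, ∀ x, ‖ν t x‖ ≤ b t)
    (hηbd : ∀ t ∈ Icc (0:ℝ) 1, ∀ x, ‖η t x‖ ≤ b t)
    (hνder : ∀ t ∈ Icc (0:ℝ) 1, ∀ x, ‖fderiv ℝ (ν t) x‖ ≤ ℓ t)
    (hηder : ∀ t ∈ Icc (0:ℝ) 1, ∀ x, ‖fderiv ℝ (η t) x‖ ≤ ℓ t)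
    (φ : ℝ → ℝ → ℝ → EuclideanSpace ℝ (Fin n) → EuclideanSpace ℝ (Fin n))
    (hφcont : ∀ ε : ℝ, ∀ s ∈ Icc (0:ℝ) 1, ∀ x,
      ContinuousOn (fun t => φ ε s t x) (Icc (0:ℝ) 1))
    (hφ : ∀ ε : ℝ, ∀ s ∈ Icc (0:ℝ) 1, ∀ x, ∀ t ∈ Icc (0:ℝ) 1,
      φ ε s t x = x + ∫ r in s..t, (ν r (φ ε s r x) + ε • η r (φ ε s r x)))
    (hφC1 : ∀ s ∈ Icc (0:ℝ) 1, ∀ t ∈ Icc (0:ℝ) 1, ContDiff ℝ 1 (φ 0 s t))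
    (hinv : ∀ s ∈ Icc (0:ℝ) 1, ∀ τ ∈ Icc (0:ℝ) 1, ∀ y,
      ∃ e : EuclideanSpace ℝ (Fin n) ≃L[ℝ] EuclideanSpace ℝ (Fin n),
        (e : EuclideanSpace ℝ (Fin n) →L[ℝ] EuclideanSpace ℝ (Fin n))
          = fderiv ℝ (φ 0 s τ) y)
    (I : EuclideanSpace ℝ (Fin n) → ℝ) (hI : ContDiff ℝ 1 I)
    (x : EuclideanSpace ℝ (Fin n))
    (hd : HasDerivAt (fun ε => φ ε 1 0 x)
      (-∫ t in (0:ℝ)..1,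
        ((fderiv ℝ (φ 0 0 t) (φ 0 1 0 x)).inverse) (η t (φ 0 1 t x))) 0) :
    HasDerivAt (fun ε => I (φ ε 1 0 x))
      (-∫ t in (0:ℝ)..1,
        ⟪gradient (fun y => I (φ 0 t 0 y)) (φ 0 1 t x), η t (φ 0 1 t x)⟫) 0 := by
  have h01 : (0:ℝ) ∈ Icc (0:ℝ) 1 := left_mem_Icc.2 zero_le_one
  have h11 : (1:ℝ) ∈ Icc (0:ℝ) 1 := right_mem_Icc.2 zero_le_one
  have hl0 : ∀ t ∈ Icc (0:ℝ) 1, 0 ≤ ℓ t := fun t ht => (norm_nonneg _).trans (hνder t ht 0)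
  have hlip : ∀ t ∈ Icc (0:ℝ) 1, ∀ w₁ w₂ : EuclideanSpace ℝ (Fin n),
      ‖ν t w₁ - ν t w₂‖ ≤ ℓ t * ‖w₁ - w₂‖ := by
    intro t ht w₁ w₂
    exact Convex.norm_image_sub_le_of_norm_fderiv_le
      (fun w _ => ((hνC1 t ht).differentiable one_ne_zero).differentiableAt)
      (fun w _ => hνder t ht w) convex_univ (mem_univ w₂) (mem_univ w₁)
  -- flow equation at ε = 0
  have hφ0 : ∀ s ∈ Icc (0:ℝ) 1, ∀ w, ∀ t ∈ Icc (0:ℝ) 1,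
      φ 0 s t w = w + ∫ r in s..t, ν r (φ 0 s r w) := by
    intro s hs w t ht
    have h := hφ 0 s hs w t ht
    simpa using h
  have hφss : ∀ s ∈ Icc (0:ℝ) 1, ∀ w, φ 0 s s w = w := by
    intro s hs w
    have h := hφ0 s hs w s hs
    simpa using h
  -- integrability of ν along continuous curves
  have hνint : ∀ u : ℝ → EuclideanSpace ℝ (Fin n), ContinuousOn u (Icc (0:ℝ) 1) →
      IntegrableOn (fun r => ν r (u r)) (Icc (0:ℝ) 1) := by
    intro u hu
    refine Integrable.mono' hbint
      (caratheodory_aesm hνmeas (fun t ht => (hνC1 t ht).continuous) hu) ?_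
    rw [ae_restrict_iff' measurableSet_Icc]
    exact Eventually.of_forall (fun t ht => hνbd t ht (u t))
  -- equation re-anchored at τ
  have hanchor : ∀ s ∈ Icc (0:ℝ) 1, ∀ w, ∀ τ ∈ Icc (0:ℝ) 1, ∀ t ∈ Icc (0:ℝ) 1,
      φ 0 s t w = φ 0 s τ w + ∫ r in τ..t, ν r (φ 0 s r w) := by
    intro s hs w τ hτ t ht
    have hint := hνint _ (hφcont 0 s hs w)
    have hadd := intervalIntegral.integral_add_adjacent_intervals
      (II_of_integrableOn hint hs hτ) (II_of_integrableOn hint hτ ht)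
    rw [hφ0 s hs w t ht, hφ0 s hs w τ hτ, ← hadd]
    abel
  -- composition rule for the flow
  have hcomp : ∀ s ∈ Icc (0:ℝ) 1, ∀ τ ∈ Icc (0:ℝ) 1, ∀ t ∈ Icc (0:ℝ) 1, ∀ w,
      φ 0 τ t (φ 0 s τ w) = φ 0 s t w := by
    intro s hs τ hτ t ht w
    have hu : ContinuousOn (fun t' => φ 0 s t' w) (Icc (0:ℝ) 1) := hφcont 0 s hs w
    have hv : ContinuousOn (fun t' => φ 0 τ t' (φ 0 s τ w)) (Icc (0:ℝ) 1) :=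
      hφcont 0 τ hτ (φ 0 s τ w)
    have hue : ∀ t' ∈ Icc (0:ℝ) 1, φ 0 s t' w
        = φ 0 s τ w + ∫ r in τ..t', ν r (φ 0 s r w) := fun t' ht' =>
      hanchor s hs w τ hτ t' ht'
    have hve : ∀ t' ∈ Icc (0:ℝ) 1, φ 0 τ t' (φ 0 s τ w)
        = φ 0 τ τ (φ 0 s τ w) + ∫ r in τ..t', ν r (φ 0 τ r (φ 0 s τ w)) := by
      intro t' ht'
      rw [hφss τ hτ (φ 0 s τ w)]
      exact hφ0 τ hτ (φ 0 s τ w) t' ht'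
    have h0 : φ 0 s τ w = φ 0 τ τ (φ 0 s τ w) := (hφss τ hτ (φ 0 s τ w)).symm
    have key := flow_dist ν hℓint hl0 hlip hτ hu hv
      (hνint _ hu) (hνint _ hv) hue hve t ht
    rw [← h0, sub_self, norm_zero, zero_mul] at key
    exact (sub_eq_zero.1 (norm_le_zero_iff.1 key)).symm
  -- key points and derived identities
  have hy : ∀ t ∈ Icc (0:ℝ) 1, φ 0 0 t (φ 0 1 0 x) = φ 0 1 t x :=
    fun t ht => hcomp 1 h11 0 h01 t ht x
  have hy' : ∀ t ∈ Icc (0:ℝ) 1, φ 0 t 0 (φ 0 1 t x) = φ 0 1 0 x :=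
    fun t ht => hcomp 1 h11 t ht 0 h01 x
  have hidA : ∀ t ∈ Icc (0:ℝ) 1, ∀ w, φ 0 0 t (φ 0 t 0 w) = w := by
    intro t ht w
    have h := hcomp t ht 0 h01 t ht w
    rwa [hφss t ht w] at h
  have hidB : ∀ t ∈ Icc (0:ℝ) 1, ∀ w, φ 0 t 0 (φ 0 0 t w) = w := by
    intro t ht w
    have h := hcomp 0 h01 t ht 0 h01 w
    rwa [hφss 0 h01 w] at h
  have hdiffφ : ∀ s ∈ Icc (0:ℝ) 1, ∀ t ∈ Icc (0:ℝ) 1, Differentiable ℝ (φ 0 s t) :=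
    fun s hs t ht => (hφC1 s hs t ht).differentiable one_ne_zero
  have hABid : ∀ t ∈ Icc (0:ℝ) 1,
      (fderiv ℝ (φ 0 0 t) (φ 0 1 0 x)).comp (fderiv ℝ (φ 0 t 0) (φ 0 1 t x))
        = ContinuousLinearMap.id ℝ (EuclideanSpace ℝ (Fin n)) := by
    intro t ht
    have hfun : (φ 0 0 t) ∘ (φ 0 t 0) = id := funext (fun w => hidA t ht w)
    have h2 := fderiv_comp (𝕜 := ℝ) (φ 0 1 t x)
      ((hdiffφ 0 h01 t ht) (φ 0 t 0 (φ 0 1 t x)))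
      ((hdiffφ t ht 0 h01) (φ 0 1 t x))
    rw [hfun, fderiv_id, hy' t ht] at h2
    exact h2.symm
  have hBAid : ∀ t ∈ Icc (0:ℝ) 1,
      (fderiv ℝ (φ 0 t 0) (φ 0 1 t x)).comp (fderiv ℝ (φ 0 0 t) (φ 0 1 0 x))
        = ContinuousLinearMap.id ℝ (EuclideanSpace ℝ (Fin n)) := by
    intro t ht
    have hfun : (φ 0 t 0) ∘ (φ 0 0 t) = id := funext (fun w => hidB t ht w)
    have h2 := fderiv_comp (𝕜 := ℝ) (φ 0 1 0 x)
      ((hdiffφ t ht 0 h01) (φ 0 0 t (φ 0 1 0 x)))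
      ((hdiffφ 0 h01 t ht) (φ 0 1 0 x))
    rw [hfun, fderiv_id, hy t ht] at h2
    exact h2.symm
  have hAunit : ∀ t ∈ Icc (0:ℝ) 1, IsUnit (fderiv ℝ (φ 0 0 t) (φ 0 1 0 x)) := by
    intro t ht
    exact ⟨⟨fderiv ℝ (φ 0 0 t) (φ 0 1 0 x), fderiv ℝ (φ 0 t 0) (φ 0 1 t x),
      hABid t ht, hBAid t ht⟩, rfl⟩
  have hRinvB : ∀ t ∈ Icc (0:ℝ) 1,
      Ring.inverse (fderiv ℝ (φ 0 0 t) (φ 0 1 0 x)) = fderiv ℝ (φ 0 t 0) (φ 0 1 t x) := by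
    intro t ht
    have h := Ring.inverse_unit (⟨fderiv ℝ (φ 0 0 t) (φ 0 1 0 x),
      fderiv ℝ (φ 0 t 0) (φ 0 1 t x), hABid t ht, hBAid t ht⟩ : Units _)
    exact h
  -- Lipschitz bound for the flow and its derivative
  have hflowlip : ∀ s ∈ Icc (0:ℝ) 1, ∀ t ∈ Icc (0:ℝ) 1, ∀ w₁ w₂,
      ‖φ 0 s t w₁ - φ 0 s t w₂‖ ≤ ‖w₁ - w₂‖ * Real.exp (2 * ∫ r in (0:ℝ)..1, ℓ r) := by
    intro s hs t ht w₁ w₂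
    have key := flow_dist ν hℓint hl0 hlip hs (hφcont 0 s hs w₁) (hφcont 0 s hs w₂)
      (hνint _ (hφcont 0 s hs w₁)) (hνint _ (hφcont 0 s hs w₂))
      (fun t' ht' => hanchor s hs w₁ s hs t' ht')
      (fun t' ht' => hanchor s hs w₂ s hs t' ht') t ht
    rwa [hφss s hs w₁, hφss s hs w₂] at key
  have hK0 : (0:ℝ) ≤ Real.exp (2 * ∫ r in (0:ℝ)..1, ℓ r) := (Real.exp_pos _).le
  have hBnorm : ∀ t ∈ Icc (0:ℝ) 1, ∀ y,
      ‖fderiv ℝ (φ 0 t 0) y‖ ≤ Real.exp (2 * ∫ r in (0:ℝ)..1, ℓ r) := by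
    intro t ht y
    have hlipW : LipschitzWith (Real.toNNReal (Real.exp (2 * ∫ r in (0:ℝ)..1, ℓ r)))
        (φ 0 t 0) := by
      apply LipschitzWith.of_dist_le_mul
      intro w₁ w₂
      rw [dist_eq_norm, dist_eq_norm, Real.coe_toNNReal _ hK0]
      calc ‖φ 0 t 0 w₁ - φ 0 t 0 w₂‖
          ≤ ‖w₁ - w₂‖ * Real.exp (2 * ∫ r in (0:ℝ)..1, ℓ r) := hflowlip t ht 0 h01 w₁ w₂
      _ = Real.exp (2 * ∫ r in (0:ℝ)..1, ℓ r) * ‖w₁ - w₂‖ := by ring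
    have h := norm_fderiv_le_of_lipschitz ℝ hlipW (x₀ := y)
    rwa [Real.coe_toNNReal _ hK0] at h
  -- measurability of t ↦ fderiv (φ 0 0 t) z
  classical
  have hcol : ∀ v, AEStronglyMeasurable (fun t => fderiv ℝ (φ 0 0 t) (φ 0 1 0 x) v)
      (volume.restrict (Icc (0:ℝ) 1)) := by
    intro v
    apply aestronglyMeasurable_of_tendsto_ae atTop
      (f := fun (k : ℕ) => fun t => ((k:ℝ)+1) •
        (φ 0 0 t (φ 0 1 0 x + ((k:ℝ)+1)⁻¹ • v) - φ 0 0 t (φ 0 1 0 x)))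
    · intro k
      exact (((hφcont 0 0 h01 _).sub (hφcont 0 0 h01 _)).const_smul
        ((k:ℝ)+1)).aestronglyMeasurable measurableSet_Icc
    · rw [ae_restrict_iff' measurableSet_Icc]
      refine Eventually.of_forall (fun t ht => ?_)
      have hdf : HasFDerivAt (φ 0 0 t) (fderiv ℝ (φ 0 0 t) (φ 0 1 0 x)) (φ 0 1 0 x) :=
        ((hdiffφ 0 h01 t ht) _).hasFDerivAt
      have hc : Tendsto (fun k : ℕ => ‖(k:ℝ)+1‖) atTop atTop := by
        have h1 : Tendsto (fun k : ℕ => (k:ℝ)+1) atTop atTop :=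
          tendsto_atTop_add_const_right _ 1 tendsto_natCast_atTop_atTop
        exact h1.congr (fun k => (Real.norm_of_nonneg (by positivity)).symm)
      exact hdf.lim v hc
  have hAmeas : AEStronglyMeasurable (fun t => fderiv ℝ (φ 0 0 t) (φ 0 1 0 x))
      (volume.restrict (Icc (0:ℝ) 1)) := by
    set bas : Module.Basis (Fin n) ℝ (EuclideanSpace ℝ (Fin n)) :=
      (EuclideanSpace.basisFun (Fin n) ℝ).toBasis with hbas
    set asm : ((Fin n) → EuclideanSpace ℝ (Fin n)) →ₗ[ℝ]
        (EuclideanSpace ℝ (Fin n) →L[ℝ] EuclideanSpace ℝ (Fin n)) :=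
      (LinearMap.toContinuousLinearMap.toLinearMap).comp (bas.constr ℝ).toLinearMap with hasm
    have hasmcont : Continuous asm := asm.continuous_of_finiteDimensional
    have hasm_apply : ∀ (T : EuclideanSpace ℝ (Fin n) →L[ℝ] EuclideanSpace ℝ (Fin n)),
        asm (fun i => T (bas i)) = T := by
      intro T
      apply ContinuousLinearMap.coe_injective
      apply Module.Basis.ext bas
      intro i
      simp only [hasm, LinearMap.comp_apply, LinearEquiv.coe_toLinearMap,
        LinearMap.coe_toContinuousLinearMap, Module.Basis.constr_basis]
      rfl
    have hcols : AEStronglyMeasurable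
        (fun t => (fun i => fderiv ℝ (φ 0 0 t) (φ 0 1 0 x) (bas i)))
        (volume.restrict (Icc (0:ℝ) 1)) := by
      have heq : (fun t => (fun i => fderiv ℝ (φ 0 0 t) (φ 0 1 0 x) (bas i)))
          = fun t => ∑ i : Fin n, Pi.single i (fderiv ℝ (φ 0 0 t) (φ 0 1 0 x) (bas i)) :=
        funext fun t => (Finset.univ_sum_single _).symm
      rw [heq]
      apply Finset.aestronglyMeasurable_fun_sum
      intro i _
      have hsingle : Continuous (fun w : EuclideanSpace ℝ (Fin n) =>
          (Pi.single i w : Fin n → EuclideanSpace ℝ (Fin n))) :=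
        (LinearMap.single ℝ (fun _ : Fin n => EuclideanSpace ℝ (Fin n))
          i).continuous_of_finiteDimensional
      exact hsingle.comp_aestronglyMeasurable (hcol (bas i))
    have := hasmcont.comp_aestronglyMeasurable hcols
    exact this.congr (Eventually.of_forall (fun t => hasm_apply _))
  -- measurability and integrability of the integrand
  have hηu : AEStronglyMeasurable (fun t => η t (φ 0 1 t x))
      (volume.restrict (Icc (0:ℝ) 1)) :=
    caratheodory_aesm hηmeas (fun t ht => (hηC1 t ht).continuous) (hφcont 0 1 h11 x)
  have hRinvMeas : AEStronglyMeasurable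
      (fun t => Ring.inverse (fderiv ℝ (φ 0 0 t) (φ 0 1 0 x)))
      (volume.restrict (Icc (0:ℝ) 1)) := by
    apply aesm_ring_inverse hAmeas
    rw [ae_restrict_iff' measurableSet_Icc]
    exact Eventually.of_forall (fun t ht => hAunit t ht)
  have hΦmeas : AEStronglyMeasurable
      (fun t => Ring.inverse (fderiv ℝ (φ 0 0 t) (φ 0 1 0 x)) (η t (φ 0 1 t x)))
      (volume.restrict (Icc (0:ℝ) 1)) :=
    isBoundedBilinearMap_apply.continuous.comp_aestronglyMeasurable
      (hRinvMeas.prodMk hηu)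
  have hΦint : IntegrableOn
      (fun t => Ring.inverse (fderiv ℝ (φ 0 0 t) (φ 0 1 0 x)) (η t (φ 0 1 t x)))
      (Icc (0:ℝ) 1) := by
    refine Integrable.mono' (hbint.const_mul (Real.exp (2 * ∫ r in (0:ℝ)..1, ℓ r)))
      hΦmeas ?_
    rw [ae_restrict_iff' measurableSet_Icc]
    refine Eventually.of_forall (fun t ht => ?_)
    rw [hRinvB t ht]
    calc ‖fderiv ℝ (φ 0 t 0) (φ 0 1 t x) (η t (φ 0 1 t x))‖
        ≤ ‖fderiv ℝ (φ 0 t 0) (φ 0 1 t x)‖ * ‖η t (φ 0 1 t x)‖ :=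
          ContinuousLinearMap.le_opNorm _ _
    _ ≤ Real.exp (2 * ∫ r in (0:ℝ)..1, ℓ r) * b t :=
          mul_le_mul (hBnorm t ht _) (hηbd t ht _) (norm_nonneg _) hK0
  -- final assembly via the chain rule
  have hIdiff : DifferentiableAt ℝ I (φ 0 1 0 x) := (hI.differentiable one_ne_zero) _
  have hmain := (hIdiff.hasFDerivAt).comp_hasDerivAt 0 hd
  refine hmain.congr_deriv (Eq.symm ?_)
  have hinv_eq : ∀ t : ℝ, (fderiv ℝ (φ 0 0 t) (φ 0 1 0 x)).inverse
      = Ring.inverse (fderiv ℝ (φ 0 0 t) (φ 0 1 0 x)) := by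
    intro t
    rw [ContinuousLinearMap.ringInverse_eq_inverse]
  simp only [hinv_eq]
  rw [map_neg, ← ContinuousLinearMap.intervalIntegral_comp_comm
    (fderiv ℝ I (φ 0 1 0 x)) (II_of_integrableOn hΦint h01 h11)]
  congr 1
  apply intervalIntegral.integral_congr
  intro t ht'
  rw [uIcc_of_le zero_le_one] at ht'
  show ⟪gradient (fun y => I (φ 0 t 0 y)) (φ 0 1 t x), η t (φ 0 1 t x)⟫
      = fderiv ℝ I (φ 0 1 0 x) (Ring.inverse (fderiv ℝ (φ 0 0 t) (φ 0 1 0 x)) (η t (φ 0 1 t x)))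
  rw [hRinvB t ht', inner_gradient]
  have hfc := fderiv_comp (𝕜 := ℝ) (φ 0 1 t x)
    (hI.differentiable one_ne_zero (φ 0 t 0 (φ 0 1 t x)))
    ((hdiffφ t ht' 0 h01) (φ 0 1 t x))
  rw [hy' t ht'] at hfc
  rw [show (fun y => I (φ 0 t 0 y)) = I ∘ (φ 0 t 0) from rfl, hfc]
  rfl
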